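/- Let D be a proper domain in a Banach space and let x, y ∈ D with k_D(x,y) ≤ 1. Then every c₀-quasigeodesic γ from x to y is an 18c₀e^{9c₀}-uniform arc; in particular ℓ(γ) ≤ 18c₀e^{9c₀}·|x − y|. -/

import Mathlib

open Set ENNReal

variable {E : Type*} [NormedAddCommGroup E]

/-- Distance to the boundary (= distance to the complement, for open sets). -/
noncomputable def dD (D : Set E) (z : E) : ℝ := Metric.infDist z Dᶜ

/-- A continuous curve with image in `D`, parametrized on `[a,b]`. -/
structure CurveIn (D : Set E) (a b : ℝ) (γ : ℝ → E) : Prop where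
  le : a ≤ b
  cont : ContinuousOn γ (Set.Icc a b)
  mem : ∀ t ∈ Set.Icc a b, γ t ∈ D

/-- Arc length of `γ` on `[s,t]` (as a real number; finite iff rectifiable). -/
noncomputable def len (γ : ℝ → E) (s t : ℝ) : ℝ :=
  (eVariationOn γ (Set.Icc s t)).toReal

/-- Quasihyperbolic length of `γ` over a parameter set, defined as the supremum of
weighted Riemann sums `Σ |γ(t_{i+1}) - γ(t_i)| / d_D(γ(t_i))` over monotone sequences. -/
noncomputable def qhVar (D : Set E) (γ : ℝ → E) (s : Set ℝ) : ℝ≥0∞ :=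
  ⨆ p : ℕ × { u : ℕ → ℝ // Monotone u ∧ ∀ i, u i ∈ s },
    ∑ i ∈ Finset.range p.1,
      ENNReal.ofReal (dist (γ (p.2.1 (i + 1))) (γ (p.2.1 i)) / dD D (γ (p.2.1 i)))

/-- Quasihyperbolic distance: infimum of quasihyperbolic lengths of curves in `D`
joining `x` and `y`. -/
noncomputable def qhDist (D : Set E) (x y : E) : ℝ :=
  (⨅ q : { q : ℝ × ℝ × (ℝ → E) //
      CurveIn D q.1 q.2.1 q.2.2 ∧ q.2.2 q.1 = x ∧ q.2.2 q.2.1 = y },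
    qhVar D q.1.2.2 (Set.Icc q.1.1 q.1.2.1)).toReal

/-- Inner (intrinsic) distance in `D`: infimum of arc lengths of curves in `D`
joining `x` and `y`. -/
noncomputable def innerDist (D : Set E) (x y : E) : ℝ :=
  (⨅ q : { q : ℝ × ℝ × (ℝ → E) //
      CurveIn D q.1 q.2.1 q.2.2 ∧ q.2.2 q.1 = x ∧ q.2.2 q.2.1 = y },
    eVariationOn q.1.2.2 (Set.Icc q.1.1 q.1.2.1)).toReal

/-- A proper domain: open, connected, and not the whole space. -/
def IsProperDomain (D : Set E) : Prop := IsOpen D ∧ IsConnected D ∧ D ≠ Set.univ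

/-- `(D, k_D)` is δ-Gromov hyperbolic (Gromov product formulation). -/
def GromovHyp (D : Set E) (δ : ℝ) : Prop :=
  ∀ x ∈ D, ∀ y ∈ D, ∀ z ∈ D, ∀ p ∈ D,
    (qhDist D p x + qhDist D p z - qhDist D x z) / 2 ≥
      min ((qhDist D p x + qhDist D p y - qhDist D x y) / 2)
          ((qhDist D p y + qhDist D p z - qhDist D y z) / 2) - δ

/-- A `c`-quasigeodesic in `D`: `ℓ_k(γ[s,t]) ≤ c·k_D(γ s, γ t)` for all parameters. -/
def IsQuasigeodesic (D : Set E) (c : ℝ) (a b : ℝ) (γ : ℝ → E) : Prop :=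
  CurveIn D a b γ ∧
    ∀ s t, a ≤ s → s ≤ t → t ≤ b →
      qhVar D γ (Set.Icc s t) ≤ ENNReal.ofReal (c * qhDist D (γ s) (γ t))

/-- An `h`-short arc in `D`: `ℓ_k(γ[s,t]) ≤ k_D(γ s, γ t) + h` for all parameters. -/
def ShortArc (D : Set E) (h : ℝ) (a b : ℝ) (γ : ℝ → E) : Prop :=
  CurveIn D a b γ ∧
    ∀ s t, a ≤ s → s ≤ t → t ≤ b →
      qhVar D γ (Set.Icc s t) ≤ ENNReal.ofReal (qhDist D (γ s) (γ t) + h)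

/-- The coefficient `c^λ_{x,y} = min{1 + λ/(2 k_D(x,y)), 9/8}`. -/
noncomputable def lamCoef (D : Set E) (lam : ℝ) (x y : E) : ℝ :=
  min (1 + lam / (2 * qhDist D x y)) (9 / 8)

/-- A λ-curve: a `c^λ_{x,y}`-quasigeodesic with endpoints `x = γ a`, `y = γ b`. -/
def IsLambdaCurve (D : Set E) (lam : ℝ) (a b : ℝ) (γ : ℝ → E) : Prop :=
  CurveIn D a b γ ∧
    ∀ s t, a ≤ s → s ≤ t → t ≤ b →
      qhVar D γ (Set.Icc s t) ≤
        ENNReal.ofReal (lamCoef D lam (γ a) (γ b) * qhDist D (γ s) (γ t))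

/-- A `c`-cone arc (John curve): double cone condition with constant `c`. -/
def ConeArc (D : Set E) (c : ℝ) (a b : ℝ) (γ : ℝ → E) : Prop :=
  ∀ t ∈ Set.Icc a b, min (len γ a t) (len γ t b) ≤ c * dD D (γ t)

/-- A `c`-John domain. -/
def IsJohnDomain (D : Set E) (c : ℝ) : Prop :=
  ∀ x ∈ D, ∀ y ∈ D, ∃ a b γ, CurveIn D a b γ ∧
    eVariationOn γ (Set.Icc a b) ≠ ⊤ ∧ γ a = x ∧ γ b = y ∧ ConeArc D c a b γ

/-- A `c`-uniform arc: cone condition plus `ℓ(γ) ≤ c·|γ a − γ b|`. -/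
def IsUniformArc (D : Set E) (c : ℝ) (a b : ℝ) (γ : ℝ → E) : Prop :=
  CurveIn D a b γ ∧ ConeArc D c a b γ ∧ len γ a b ≤ c * ‖γ a - γ b‖

/-- A `c`-inner uniform arc: cone condition plus the Gehring–Hayman inequality
`ℓ(γ) ≤ c·σ_D(γ a, γ b)`. -/
def IsInnerUniformArc (D : Set E) (c : ℝ) (a b : ℝ) (γ : ℝ → E) : Prop :=
  CurveIn D a b γ ∧ ConeArc D c a b γ ∧ len γ a b ≤ c * innerDist D (γ a) (γ b)

/-- A `c`-inner uniform domain. -/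
def IsInnerUniform (D : Set E) (c : ℝ) : Prop :=
  ∀ x ∈ D, ∀ y ∈ D, ∃ a b γ, γ a = x ∧ γ b = y ∧ IsInnerUniformArc D c a b γ


/-! ### Auxiliary lemmas -/

lemma dD_pos {D : Set E} (hDo : IsOpen D) (hne : D ≠ Set.univ) {z : E} (hz : z ∈ D) :
    0 < dD D z :=
  (hDo.isClosed_compl.notMem_iff_infDist_pos (Set.nonempty_compl.2 hne)).1 (by simpa using hz)

lemma sum_le_qhVar (D : Set E) (γ : ℝ → E) (s : Set ℝ) (n : ℕ) (u : ℕ → ℝ)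
    (hu : Monotone u) (hmem : ∀ i, u i ∈ s) :
    ∑ i ∈ Finset.range n, ENNReal.ofReal (dist (γ (u (i+1))) (γ (u i)) / dD D (γ (u i)))
      ≤ qhVar D γ s :=
  le_iSup (fun p : ℕ × {u : ℕ → ℝ // Monotone u ∧ ∀ i, u i ∈ s} =>
    ∑ i ∈ Finset.range p.1,
      ENNReal.ofReal (dist (γ (p.2.1 (i+1))) (γ (p.2.1 i)) / dD D (γ (p.2.1 i))))
    (n, ⟨u, hu, hmem⟩)

lemma qhVar_mono (D : Set E) (γ : ℝ → E) {s t : Set ℝ} (h : s ⊆ t) :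
    qhVar D γ s ≤ qhVar D γ t :=
  iSup_le fun p => sum_le_qhVar D γ t p.1 p.2.1 p.2.2.1 (fun i => h (p.2.2.2 i))

lemma dist_le_of_qhVar {D : Set E} {γ : ℝ → E} {s t Q : ℝ} (hst : s ≤ t)
    (hd : 0 < dD D (γ s)) (hQ : 0 ≤ Q)
    (h : qhVar D γ (Set.Icc s t) ≤ ENNReal.ofReal Q) :
    dist (γ t) (γ s) ≤ dD D (γ s) * Q := by
  set u : ℕ → ℝ := fun i => if i = 0 then s else t with hu
  have hmono : Monotone u := by
    intro i j hij
    rcases Nat.eq_zero_or_pos i with hi | hi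
    · subst hi; by_cases hj : j = 0 <;> simp [hu, hj, hst]
    · have hj : j ≠ 0 := by omega
      have hi' : i ≠ 0 := by omega
      simp [hu, hi', hj]
  have hmem : ∀ i, u i ∈ Set.Icc s t := by
    intro i
    by_cases hi : i = 0 <;> simp [hu, hi, hst]
  have key := le_trans (sum_le_qhVar D γ (Set.Icc s t) 1 u hmono hmem) h
  rw [Finset.sum_range_one] at key
  have h01 : u 1 = t := by simp [hu]
  have h00 : u 0 = s := by simp [hu]
  rw [h01, h00] at key
  have := (ENNReal.ofReal_le_ofReal_iff hQ).1 key
  calc dist (γ t) (γ s) = dD D (γ s) * (dist (γ t) (γ s) / dD D (γ s)) := by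
        field_simp
    _ ≤ dD D (γ s) * Q := mul_le_mul_of_nonneg_left this hd.le

lemma evar_le_qhVar {D : Set E} {γ : ℝ → E} {s : Set ℝ} {M : ℝ} (hM : 0 ≤ M)
    (h : ∀ u ∈ s, 0 < dD D (γ u) ∧ dD D (γ u) ≤ M) :
    eVariationOn γ s ≤ ENNReal.ofReal M * qhVar D γ s := by
  rw [eVariationOn]
  refine iSup_le fun p => ?_
  obtain ⟨n, u, hu, humem⟩ := p
  calc ∑ i ∈ Finset.range n, edist (γ (u (i+1))) (γ (u i))
      ≤ ∑ i ∈ Finset.range n,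
          ENNReal.ofReal M * ENNReal.ofReal (dist (γ (u (i+1))) (γ (u i)) / dD D (γ (u i))) := by
        refine Finset.sum_le_sum fun i _ => ?_
        obtain ⟨hd, hdM⟩ := h (u i) (humem i)
        rw [edist_dist, ← ENNReal.ofReal_mul hM]
        apply ENNReal.ofReal_le_ofReal
        have h1 : 1 ≤ M / dD D (γ (u i)) := (one_le_div hd).2 hdM
        calc dist (γ (u (i+1))) (γ (u i))
            ≤ dist (γ (u (i+1))) (γ (u i)) * (M / dD D (γ (u i))) :=
              le_mul_of_one_le_right dist_nonneg h1
          _ = M * (dist (γ (u (i+1))) (γ (u i)) / dD D (γ (u i))) := by ring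
    _ = ENNReal.ofReal M * ∑ i ∈ Finset.range n,
          ENNReal.ofReal (dist (γ (u (i+1))) (γ (u i)) / dD D (γ (u i))) := by
        rw [Finset.mul_sum]
    _ ≤ ENNReal.ofReal M * qhVar D γ s :=
        mul_le_mul_right (sum_le_qhVar D γ s n u hu humem) _

lemma qhDist_le_seg [NormedSpace ℝ E] {D : Set E} (hDo : IsOpen D) (hne : D ≠ Set.univ)
    {x y : E} (hx : x ∈ D) (h2 : 2 * ‖y - x‖ ≤ dD D x) :
    qhDist D x y ≤ 2 * ‖y - x‖ / dD D x := by
  have hdx : 0 < dD D x := dD_pos hDo hne hx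
  set σ : ℝ → E := fun t => x + t • (y - x) with hσ
  have hmemD : ∀ t ∈ Set.Icc (0:ℝ) 1, σ t ∈ D := by
    intro t ht
    have hdist : dist (σ t) x ≤ ‖y - x‖ := by
      have : σ t - x = t • (y - x) := by simp [hσ]
      rw [dist_eq_norm, this, norm_smul, Real.norm_eq_abs, abs_of_nonneg ht.1]
      exact mul_le_of_le_one_left (norm_nonneg _) ht.2
    by_contra hcon
    have h1 : dD D x ≤ dist x (σ t) := Metric.infDist_le_dist_of_mem (by simpa using hcon)
    rw [dist_comm] at h1
    linarith
  have hdlow : ∀ t ∈ Set.Icc (0:ℝ) 1, dD D x / 2 ≤ dD D (σ t) := by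
    intro t ht
    have hdist : dist x (σ t) ≤ ‖y - x‖ := by
      have : σ t - x = t • (y - x) := by simp [hσ]
      rw [dist_comm, dist_eq_norm, this, norm_smul, Real.norm_eq_abs, abs_of_nonneg ht.1]
      exact mul_le_of_le_one_left (norm_nonneg _) ht.2
    have := Metric.infDist_le_infDist_add_dist (s := Dᶜ) (x := x) (y := σ t)
    have : dD D x ≤ dD D (σ t) + dist x (σ t) := this
    linarith
  have hcurve : CurveIn D 0 1 σ := by
    refine ⟨zero_le_one, ?_, hmemD⟩
    exact (continuous_const.add (continuous_id.smul continuous_const)).continuousOn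
  have hσ0 : σ 0 = x := by simp [hσ]
  have hσ1 : σ 1 = y := by simp [hσ]
  have hqv : qhVar D σ (Set.Icc 0 1) ≤ ENNReal.ofReal (2 * ‖y - x‖ / dD D x) := by
    refine iSup_le fun p => ?_
    obtain ⟨n, u, hu, humem⟩ := p
    have hterm : ∀ i, dist (σ (u (i+1))) (σ (u i)) = (u (i+1) - u i) * ‖y - x‖ := by
      intro i
      have : σ (u (i+1)) - σ (u i) = (u (i+1) - u i) • (y - x) := by
        simp [hσ, sub_smul]
      rw [dist_eq_norm, this, norm_smul, Real.norm_eq_abs,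
        abs_of_nonneg (by linarith [hu (Nat.le_succ i)])]
    have hnn : ∀ i ∈ Finset.range n, 0 ≤ dist (σ (u (i+1))) (σ (u i)) / dD D (σ (u i)) := by
      intro i _
      exact div_nonneg dist_nonneg (le_trans (by positivity) (hdlow _ (humem i)))
    rw [← ENNReal.ofReal_sum_of_nonneg hnn]
    apply ENNReal.ofReal_le_ofReal
    have hstep : ∀ i ∈ Finset.range n, dist (σ (u (i+1))) (σ (u i)) / dD D (σ (u i))
        ≤ (u (i+1) * ‖y - x‖ - u i * ‖y - x‖) * (2 / dD D x) := by
      intro i _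
      have hd2 : dD D x / 2 ≤ dD D (σ (u i)) := hdlow _ (humem i)
      have hdpos : 0 < dD D (σ (u i)) := lt_of_lt_of_le (by positivity) hd2
      rw [hterm i, div_le_iff₀ hdpos]
      have h1 : (u (i+1) - u i) * ‖y - x‖ * (2 / dD D x) * (dD D x / 2)
          = (u (i+1) - u i) * ‖y - x‖ := by field_simp
      have hnn2 : 0 ≤ (u (i+1) - u i) * ‖y - x‖ * (2 / dD D x) := by
        have h := hu (Nat.le_succ i)
        exact mul_nonneg (mul_nonneg (by linarith) (norm_nonneg _)) (by positivity)
      calc (u (i+1) - u i) * ‖y - x‖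
          = (u (i+1) - u i) * ‖y - x‖ * (2 / dD D x) * (dD D x / 2) := h1.symm
        _ ≤ (u (i+1) - u i) * ‖y - x‖ * (2 / dD D x) * dD D (σ (u i)) :=
            mul_le_mul_of_nonneg_left hd2 hnn2
        _ = (u (i+1) * ‖y - x‖ - u i * ‖y - x‖) * (2 / dD D x) * dD D (σ (u i)) := by ring
    calc ∑ i ∈ Finset.range n, dist (σ (u (i+1))) (σ (u i)) / dD D (σ (u i))
        ≤ ∑ i ∈ Finset.range n, (u (i+1) * ‖y - x‖ - u i * ‖y - x‖) * (2 / dD D x) :=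
          Finset.sum_le_sum hstep
      _ = (u n * ‖y - x‖ - u 0 * ‖y - x‖) * (2 / dD D x) := by
          rw [← Finset.sum_mul, Finset.sum_range_sub (fun i => u i * ‖y - x‖)]
      _ ≤ 2 * ‖y - x‖ / dD D x := by
          have h0 := (humem 0).1
          have h1 := (humem n).2
          have : u n * ‖y - x‖ - u 0 * ‖y - x‖ ≤ ‖y - x‖ := by
            nlinarith [norm_nonneg (y - x), (humem 0).2, (humem n).1]
          calc (u n * ‖y - x‖ - u 0 * ‖y - x‖) * (2 / dD D x)
              ≤ ‖y - x‖ * (2 / dD D x) := mul_le_mul_of_nonneg_right this (by positivity)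
            _ = 2 * ‖y - x‖ / dD D x := by ring
  refine ENNReal.toReal_le_of_le_ofReal (by positivity) ?_
  exact le_trans (iInf_le _ ⟨(0, 1, σ), hcurve, hσ0, hσ1⟩) hqv

lemma dD_start_le {D : Set E} (hDo : IsOpen D) (hne : D ≠ Set.univ)
    {a t : ℝ} (hat : a ≤ t) {γ : ℝ → E}
    (hcont : ContinuousOn γ (Set.Icc a t)) (hmem : ∀ s ∈ Set.Icc a t, γ s ∈ D)
    {Q : ℝ} (hQ : 0 ≤ Q) (hvar : qhVar D γ (Set.Icc a t) ≤ ENNReal.ofReal Q) :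
    dD D (γ a) ≤ Real.exp (2 * Q) * dD D (γ t) := by
  rcases eq_or_lt_of_le hat with rfl | hlt
  · have h1 := Real.one_le_exp (by linarith : (0:ℝ) ≤ 2 * Q)
    have h0 : 0 ≤ dD D (γ a) := Metric.infDist_nonneg
    nlinarith
  have hdcont : ContinuousOn (fun s => dD D (γ s)) (Set.Icc a t) :=
    (Metric.continuous_infDist_pt Dᶜ).comp_continuousOn hcont
  obtain ⟨s₀, hs₀, hminOn⟩ :=
    isCompact_Icc.exists_isMinOn ⟨a, Set.left_mem_Icc.2 hat⟩ hdcont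
  set m := dD D (γ s₀) with hm
  have hm0 : 0 < m := dD_pos hDo hne (hmem s₀ hs₀)
  have hmins : ∀ s ∈ Set.Icc a t, m ≤ dD D (γ s) := fun s hs => hminOn hs
  obtain ⟨δ, hδ0, hunif⟩ := Metric.uniformContinuousOn_iff.1
    (isCompact_Icc.uniformContinuousOn_of_continuous hcont) (m / 2) (by positivity)
  obtain ⟨n, hn⟩ := exists_nat_gt ((t - a) / δ)
  have hn0 : 0 < (n:ℝ) := lt_of_le_of_lt (div_nonneg (by linarith) hδ0.le) hn
  have hnn : (n:ℝ) ≠ 0 := ne_of_gt hn0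
  set c : ℝ := (t - a) / n with hc
  have hc0 : 0 ≤ c := div_nonneg (by linarith) hn0.le
  have hcδ : c < δ := by
    rw [hc, div_lt_iff₀ hn0]
    calc t - a = (t - a) / δ * δ := by field_simp
      _ < n * δ := mul_lt_mul_of_pos_right hn hδ0
      _ = δ * n := by ring
  set u : ℕ → ℝ := fun i => a + (min i n : ℕ) * c with hu
  have humono : Monotone u := by
    intro i j hij
    have : ((min i n : ℕ) : ℝ) ≤ ((min j n : ℕ) : ℝ) := by
      exact_mod_cast min_le_min_right n hij
    simp only [hu]
    nlinarith
  have humem : ∀ i, u i ∈ Set.Icc a t := by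
    intro i
    constructor
    · simp only [hu]
      nlinarith [(Nat.cast_nonneg (min i n) : (0:ℝ) ≤ ((min i n : ℕ):ℝ))]
    · simp only [hu]
      have h1 : ((min i n : ℕ) : ℝ) ≤ (n : ℝ) := by exact_mod_cast min_le_right i n
      have h2 : (n : ℝ) * c = t - a := by rw [hc]; field_simp
      nlinarith
  have hu0 : u 0 = a := by simp [hu]
  have hun : u n = t := by
    simp only [hu, min_self]
    rw [hc]; field_simp
    ring
  have hmesh : ∀ i < n, dist (γ (u (i+1))) (γ (u i)) ≤ m / 2 := by
    intro i hi
    have hui : u i = a + i * c := by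
      simp only [hu, min_eq_left (le_of_lt hi)]
    have hui1 : u (i+1) = a + (i+1) * c := by
      have : min (i+1) n = i + 1 := min_eq_left (by omega)
      simp only [hu, this]
      push_cast; ring_nf
    have hdistu : dist (u (i+1)) (u i) < δ := by
      rw [Real.dist_eq, hui, hui1]
      have : a + (↑i + 1) * c - (a + ↑i * c) = c := by ring
      rw [this, abs_of_nonneg hc0]
      exact hcδ
    exact le_of_lt (hunif _ (humem (i+1)) _ (humem i) hdistu)
  have hd : ∀ i, m ≤ dD D (γ (u i)) := fun i => hmins _ (humem i)
  have hkey : ∀ i < n, Real.log (dD D (γ (u i))) - Real.log (dD D (γ (u (i+1))))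
      ≤ 2 * (dist (γ (u (i+1))) (γ (u i)) / dD D (γ (u i))) := by
    intro i hi
    set d0 := dD D (γ (u i)) with hd0
    set d1 := dD D (γ (u (i+1))) with hd1
    set e := dist (γ (u (i+1))) (γ (u i)) with he
    have hd0p : 0 < d0 := lt_of_lt_of_le hm0 (hd i)
    have hd1p : 0 < d1 := lt_of_lt_of_le hm0 (hd (i+1))
    have he0 : 0 ≤ e := dist_nonneg
    have hem : e ≤ m / 2 := hmesh i hi
    have hlip : d0 ≤ d1 + e := by
      have := Metric.infDist_le_infDist_add_dist (s := Dᶜ) (x := γ (u i)) (y := γ (u (i+1)))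
      rw [dist_comm] at this
      exact this
    have hd1half : d0 / 2 ≤ d1 := by
      have : m ≤ d0 := hd i
      linarith
    have hlog : Real.log (d0 / d1) ≤ d0 / d1 - 1 :=
      Real.log_le_sub_one_of_pos (by positivity)
    rw [Real.log_div (ne_of_gt hd0p) (ne_of_gt hd1p)] at hlog
    have h2 : d0 / d1 - 1 ≤ 2 * (e / d0) := by
      rw [div_sub_one (ne_of_gt hd1p)]
      rw [div_le_iff₀ hd1p]
      have : 2 * (e / d0) * d1 = 2 * e * (d1 / d0) := by ring
      rw [this]
      have hrat : 1 / 2 ≤ d1 / d0 := by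
        rw [le_div_iff₀ hd0p]; linarith
      nlinarith
    linarith
  have hsumENN := le_trans (sum_le_qhVar D γ (Set.Icc a t) n u humono humem) hvar
  have hnnterms : ∀ i ∈ Finset.range n, 0 ≤ dist (γ (u (i+1))) (γ (u i)) / dD D (γ (u i)) :=
    fun i _ => div_nonneg dist_nonneg (le_of_lt (lt_of_lt_of_le hm0 (hd i)))
  rw [← ENNReal.ofReal_sum_of_nonneg hnnterms] at hsumENN
  have hsum : ∑ i ∈ Finset.range n, dist (γ (u (i+1))) (γ (u i)) / dD D (γ (u i)) ≤ Q :=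
    (ENNReal.ofReal_le_ofReal_iff hQ).1 hsumENN
  have htel : ∑ i ∈ Finset.range n,
      (Real.log (dD D (γ (u i))) - Real.log (dD D (γ (u (i+1)))))
      = Real.log (dD D (γ (u 0))) - Real.log (dD D (γ (u n))) :=
    Finset.sum_range_sub' (fun i => Real.log (dD D (γ (u i)))) n
  have hlogsum : Real.log (dD D (γ a)) - Real.log (dD D (γ t)) ≤ 2 * Q := by
    rw [← hu0, ← hun, ← htel]
    calc ∑ i ∈ Finset.range n,
        (Real.log (dD D (γ (u i))) - Real.log (dD D (γ (u (i+1)))))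
        ≤ ∑ i ∈ Finset.range n, 2 * (dist (γ (u (i+1))) (γ (u i)) / dD D (γ (u i))) :=
          Finset.sum_le_sum fun i hi => hkey i (Finset.mem_range.1 hi)
      _ = 2 * ∑ i ∈ Finset.range n, dist (γ (u (i+1))) (γ (u i)) / dD D (γ (u i)) := by
          rw [Finset.mul_sum]
      _ ≤ 2 * Q := by linarith
  have hda : 0 < dD D (γ a) := dD_pos hDo hne (hmem a (Set.left_mem_Icc.2 hat))
  have hdt : 0 < dD D (γ t) := dD_pos hDo hne (hmem t (Set.right_mem_Icc.2 hat))
  calc dD D (γ a) = Real.exp (Real.log (dD D (γ a))) := (Real.exp_log hda).symm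
    _ ≤ Real.exp (2 * Q + Real.log (dD D (γ t))) := Real.exp_le_exp.2 (by linarith)
    _ = Real.exp (2 * Q) * dD D (γ t) := by rw [Real.exp_add, Real.exp_log hdt]


set_option maxHeartbeats 1000000 in
theorem stmt18 {E : Type*} [NormedAddCommGroup E] [NormedSpace ℝ E] [CompleteSpace E]
    (D : Set E) (hD : IsProperDomain D) (c₀ : ℝ) (hc₀ : 1 ≤ c₀)
    (x y : E) (hx : x ∈ D) (hy : y ∈ D) (hk : qhDist D x y ≤ 1)
    (a b : ℝ) (γ : ℝ → E) (hγ : IsQuasigeodesic D c₀ a b γ)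
    (hxa : γ a = x) (hyb : γ b = y) :
    IsUniformArc D (18 * c₀ * Real.exp (9 * c₀)) a b γ := by
  obtain ⟨hDo, hDconn, hDne⟩ := hD
  obtain ⟨hcurve, hqg⟩ := hγ
  have hab : a ≤ b := hcurve.le
  set K := qhDist D x y with hKdef
  have hK0 : 0 ≤ K := ENNReal.toReal_nonneg
  have hdx : 0 < dD D x := dD_pos hDo hDne hx
  have hvar_ab : qhVar D γ (Set.Icc a b) ≤ ENNReal.ofReal (c₀ * K) := by
    have := hqg a b le_rfl hab le_rfl
    rwa [hxa, hyb] at this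
  have hQ0 : 0 ≤ c₀ * K := mul_nonneg (by linarith) hK0
  have hMbound : ∀ u ∈ Set.Icc a b, dD D (γ u) ≤ 2 * c₀ * dD D x := by
    intro u hu
    have hvar_au : qhVar D γ (Set.Icc a u) ≤ ENNReal.ofReal (c₀ * K) :=
      le_trans (qhVar_mono D γ (Set.Icc_subset_Icc le_rfl hu.2)) hvar_ab
    have hdd : dist (γ u) (γ a) ≤ dD D (γ a) * (c₀ * K) :=
      dist_le_of_qhVar hu.1 (by rw [hxa]; exact hdx) hQ0 hvar_au
    rw [hxa] at hdd
    have h1 : dD D (γ u) ≤ dD D x + dist (γ u) x :=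
      Metric.infDist_le_infDist_add_dist
    nlinarith [mul_nonneg (mul_nonneg hdx.le (by linarith : (0:ℝ) ≤ c₀)) (sub_nonneg.2 hk)]
  set L := 2 * c₀ * dD D x * (c₀ * K) with hLdef
  have hL0 : 0 ≤ L := by
    have : (0:ℝ) ≤ 2 * c₀ * dD D x := by nlinarith
    exact mul_nonneg this hQ0
  have hEVar : eVariationOn γ (Set.Icc a b) ≤ ENNReal.ofReal L := by
    calc eVariationOn γ (Set.Icc a b)
        ≤ ENNReal.ofReal (2 * c₀ * dD D x) * qhVar D γ (Set.Icc a b) :=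
          evar_le_qhVar (by nlinarith)
            (fun u hu => ⟨dD_pos hDo hDne (hcurve.mem u hu), hMbound u hu⟩)
      _ ≤ ENNReal.ofReal (2 * c₀ * dD D x) * ENNReal.ofReal (c₀ * K) :=
          mul_le_mul_right hvar_ab _
      _ = ENNReal.ofReal L := by rw [← ENNReal.ofReal_mul (by nlinarith)]
  have hlen_ab : len γ a b ≤ L := ENNReal.toReal_le_of_le_ofReal hL0 hEVar
  have hdxy : dist x y = ‖y - x‖ := by rw [dist_eq_norm, norm_sub_rev]
  have hKle : K * dD D x ≤ 2 * dist x y := by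
    by_cases hcase : 2 * ‖y - x‖ ≤ dD D x
    · have h2 : K ≤ 2 * ‖y - x‖ / dD D x := qhDist_le_seg hDo hDne hx hcase
      have h3 := (le_div_iff₀ hdx).1 h2
      rw [hdxy]
      linarith
    · push_neg at hcase
      rw [hdxy]
      nlinarith
  have hE9 : 9 * c₀ + 1 ≤ Real.exp (9 * c₀) := Real.add_one_le_exp _
  have hE7 : 7 * c₀ + 1 ≤ Real.exp (7 * c₀) := Real.add_one_le_exp _
  have hsplit : Real.exp (9 * c₀) = Real.exp (2 * c₀) * Real.exp (7 * c₀) := by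
    rw [← Real.exp_add]; ring_nf
  have hconeAll : ∀ t ∈ Set.Icc a b, len γ a t ≤ 18 * c₀ * Real.exp (9 * c₀) * dD D (γ t) := by
    intro t ht
    have hsub : Set.Icc a t ⊆ Set.Icc a b := Set.Icc_subset_Icc le_rfl ht.2
    have hvar_at : qhVar D γ (Set.Icc a t) ≤ ENNReal.ofReal (c₀ * K) :=
      le_trans (qhVar_mono D γ hsub) hvar_ab
    have hexp := dD_start_le hDo hDne ht.1 (hcurve.cont.mono hsub)
      (fun s hs => hcurve.mem s (hsub hs)) hQ0 hvar_at
    rw [hxa] at hexp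
    have hdt0 : (0:ℝ) ≤ dD D (γ t) := Metric.infDist_nonneg
    have hexp2 : Real.exp (2 * (c₀ * K)) ≤ Real.exp (2 * c₀) :=
      Real.exp_le_exp.2 (by nlinarith)
    have hdx_le : dD D x ≤ Real.exp (2 * c₀) * dD D (γ t) :=
      le_trans hexp (mul_le_mul_of_nonneg_right hexp2 hdt0)
    have hlen_at : len γ a t ≤ L :=
      ENNReal.toReal_le_of_le_ofReal hL0 (le_trans (eVariationOn.mono γ hsub) hEVar)
    have hL1 : L ≤ 2 * c₀ ^ 2 * dD D x := by
      rw [hLdef]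
      nlinarith [mul_nonneg (mul_nonneg (by positivity : (0:ℝ) ≤ 2 * c₀ ^ 2) hdx.le)
        (sub_nonneg.2 hk)]
    have hL2 : L ≤ 2 * c₀ ^ 2 * (Real.exp (2 * c₀) * dD D (γ t)) :=
      le_trans hL1 (mul_le_mul_of_nonneg_left hdx_le (by nlinarith))
    have hconst : 2 * c₀ ^ 2 * Real.exp (2 * c₀) ≤ 18 * c₀ * Real.exp (9 * c₀) := by
      rw [hsplit]
      have h7 : c₀ ≤ 9 * Real.exp (7 * c₀) := by nlinarith
      have hpos : (0:ℝ) ≤ 2 * c₀ * Real.exp (2 * c₀) :=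
        mul_nonneg (by linarith) (Real.exp_pos _).le
      nlinarith [mul_le_mul_of_nonneg_left h7 hpos]
    calc len γ a t ≤ L := hlen_at
      _ ≤ 2 * c₀ ^ 2 * (Real.exp (2 * c₀) * dD D (γ t)) := hL2
      _ = 2 * c₀ ^ 2 * Real.exp (2 * c₀) * dD D (γ t) := by ring
      _ ≤ 18 * c₀ * Real.exp (9 * c₀) * dD D (γ t) :=
          mul_le_mul_of_nonneg_right hconst hdt0
  refine ⟨hcurve, ?_, ?_⟩
  · intro t ht
    exact le_trans (min_le_left _ _) (hconeAll t ht)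
  · rw [hxa, hyb]
    have hA : L ≤ 4 * c₀ ^ 2 * dist x y := by
      have h := mul_le_mul_of_nonneg_left hKle (show (0:ℝ) ≤ 2 * c₀ ^ 2 by positivity)
      rw [hLdef]
      nlinarith
    have hxy : ‖x - y‖ = dist x y := (dist_eq_norm x y).symm
    rw [hxy]
    have hconstA : 4 * c₀ ^ 2 ≤ 18 * c₀ * Real.exp (9 * c₀) := by
      calc 4 * c₀ ^ 2 ≤ 18 * c₀ * (9 * c₀ + 1) := by nlinarith
        _ ≤ 18 * c₀ * Real.exp (9 * c₀) :=
            mul_le_mul_of_nonneg_left hE9 (by linarith)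
    calc len γ a b ≤ L := hlen_ab
      _ ≤ 4 * c₀ ^ 2 * dist x y := hA
      _ ≤ 18 * c₀ * Real.exp (9 * c₀) * dist x y :=
          mul_le_mul_of_nonneg_right hconstA dist_nonneg
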